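/- Let P be a Markov kernel with stationary distribution μ satisfying the L²(μ)-geometric ergodicity condition ‖P f‖_μ ≤ (1 − 1/τ)‖f‖_μ for every f ∈ L²(μ) with μ(f) = 0, for some τ ≥ 1. Let V* = (I − γP)^{−1} r be the value function of a reward r ∈ L²(μ) with discount γ ∈ [0,1), and set V̄* := V* − (1−γ)^{−1} μ(r) · 1. If σ²(V*) := E_{X∼μ}[Var(V*(X')|X)], then σ²(V*) ≥ τ^{−1} ‖V̄*‖²_μ; consequently, for the projection error V⊥* := V* − Π_H V* onto any closed subspace H of L²(μ) containing the constant functions, ‖V⊥*‖_μ ≤ √τ · σ(V*). -/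

import Mathlib

open MeasureTheory ProbabilityTheory

section helpers
lemma aux_snd {X : Type*} [MeasurableSpace X] (μ : Measure X) [IsProbabilityMeasure μ]
    (P : Kernel X X) [IsMarkovKernel P] (hstat : μ.bind (fun x => P x) = μ) :
    (μ ⊗ₘ P).map Prod.snd = μ := by
  ext s hs
  rw [Measure.map_apply measurable_snd hs, Measure.compProd_apply (measurable_snd hs)]
  conv_rhs => rw [← hstat]
  rw [Measure.bind_apply hs (Kernel.measurable P).aemeasurable]
  rfl

lemma aux_key {X : Type*} [MeasurableSpace X] (μ : Measure X) [IsProbabilityMeasure μ]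
    (P : Kernel X X) [IsMarkovKernel P] (hstat : (μ ⊗ₘ P).map Prod.snd = μ)
    (g : X → ℝ) (hg : Measurable g) (hgi : Integrable g μ) :
    Integrable (fun x => ∫ y, g y ∂P x) μ ∧
    (∫ x, ∫ y, g y ∂P x ∂μ) = ∫ x, g x ∂μ ∧
    (∀ᵐ x ∂μ, Integrable g (P x)) := by
  have hmeas : StronglyMeasurable (fun x => ∫ y, g y ∂P x) := by
    exact StronglyMeasurable.integral_kernel_prod_right
      (f := fun _ y => g y) ((hg.comp measurable_snd).stronglyMeasurable)
  have hF : Integrable (fun p : X × X => g p.2) (μ ⊗ₘ P) := by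
    have := hgi
    rw [← hstat] at this
    exact (integrable_map_measure hg.aestronglyMeasurable measurable_snd.aemeasurable).mp this
  obtain ⟨hae, hnorm⟩ := (Measure.integrable_compProd_iff hF.aestronglyMeasurable).mp hF
  refine ⟨?_, ?_, hae⟩
  · exact Integrable.mono' hnorm hmeas.aestronglyMeasurable
      (Filter.Eventually.of_forall fun x => norm_integral_le_integral_norm _)
  · rw [← Measure.integral_compProd hF]
    conv_rhs => rw [← hstat]
    rw [integral_map measurable_snd.aemeasurable hg.aestronglyMeasurable]
end helpers

/-- if the Markov kernel `P` with stationary distribution `μ` is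
`L²(μ)`-geometrically ergodic with rate `1 - 1/τ`, and `V = r + γ P V` is the value
function of reward `r`, then with `V̄ := V - (1-γ)⁻¹ μ(r) 𝟙` the conditional variance
`σ²(V) := E_μ[Var(V(X')|X)]` satisfies `σ²(V) ≥ τ⁻¹ ‖V̄‖²_μ`; consequently for any
closed subspace `H` of `L²(μ)` containing the constants, the projection error satisfies
`‖V - Π_H V‖ ≤ √τ σ(V)`. -/
theorem stmt8 {X : Type*} [MeasurableSpace X] (μ : Measure X) [IsProbabilityMeasure μ]
    (P : Kernel X X) [IsMarkovKernel P] (hstat : μ.bind (fun x => P x) = μ)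
    (τ : ℝ) (hτ : 1 ≤ τ)
    (herg : ∀ f : X → ℝ, Measurable f → MemLp f 2 μ → (∫ x, f x ∂μ) = 0 →
      Real.sqrt (∫ x, (∫ y, f y ∂(P x)) ^ 2 ∂μ)
        ≤ (1 - 1 / τ) * Real.sqrt (∫ x, (f x) ^ 2 ∂μ))
    (γ : ℝ) (hγ0 : 0 ≤ γ) (hγ1 : γ < 1)
    (r V : X → ℝ) (hr : Measurable r) (hV : Measurable V) (hV2 : MemLp V 2 μ)
    (hfix : ∀ x, V x = r x + γ * ∫ y, V y ∂(P x)) :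
    τ⁻¹ * ∫ x, (V x - (1 - γ)⁻¹ * ∫ z, r z ∂μ) ^ 2 ∂μ
      ≤ ∫ x, ((∫ y, (V y) ^ 2 ∂(P x)) - (∫ y, V y ∂(P x)) ^ 2) ∂μ
    ∧ ∀ (H : Submodule ℝ (Lp ℝ 2 μ)) [CompleteSpace H],
        (MemLp.toLp (fun _ => (1 : ℝ)) (memLp_const 1)) ∈ H →
        ‖hV2.toLp V - (Submodule.orthogonalProjectionOnto H (hV2.toLp V) : Lp ℝ 2 μ)‖
          ≤ Real.sqrt τ *
              Real.sqrt (∫ x, ((∫ y, (V y) ^ 2 ∂(P x)) - (∫ y, V y ∂(P x)) ^ 2) ∂μ) := by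
  have hτ0 : (0:ℝ) < τ := lt_of_lt_of_le one_pos hτ
  have hsnd := aux_snd μ P hstat
  set c : ℝ := (1 - γ)⁻¹ * ∫ z, r z ∂μ with hc
  set m : X → ℝ := fun x => ∫ y, V y ∂P x with hm
  set Q : X → ℝ := fun x => ∫ y, (V y) ^ 2 ∂P x with hQ
  have hVint : Integrable V μ := hV2.integrable one_le_two
  have hV2int : Integrable (fun x => (V x) ^ 2) μ := hV2.integrable_sq
  obtain ⟨hm_int, hm_eq, hm_ae⟩ := aux_key μ P hsnd V hV hVint
  obtain ⟨hQ_int, hQ_eq, hQ_ae⟩ := aux_key μ P hsnd (fun y => (V y) ^ 2) (hV.pow_const 2) hV2int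
  have hm_meas : StronglyMeasurable m :=
    StronglyMeasurable.integral_kernel_prod_right
      (f := fun _ y => V y) ((hV.comp measurable_snd).stronglyMeasurable)
  -- a.e. Jensen: m x ^ 2 ≤ Q x
  have hjensen : ∀ᵐ x ∂μ, (m x) ^ 2 ≤ Q x := by
    filter_upwards [hm_ae, hQ_ae] with x h1 h2
    have hℒ : MemLp V 2 (P x) :=
      (memLp_two_iff_integrable_sq hV.aestronglyMeasurable).mpr h2
    have := variance_nonneg V (P x)
    rw [variance_eq_sub hℒ] at this
    have h2' : (P x)[V ^ 2] = Q x := by simp [hQ]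
    have h1' : (P x)[V] = m x := rfl
    rw [h2', h1'] at this
    linarith
  have hm2_int : Integrable (fun x => (m x) ^ 2) μ := by
    refine Integrable.mono' hQ_int ((hm_meas.measurable.pow_const 2).aestronglyMeasurable) ?_
    filter_upwards [hjensen] with x hx
    rwa [Real.norm_eq_abs, abs_of_nonneg (sq_nonneg _)]
  -- mean of V is c
  have hrint : Integrable r μ := by
    have : r = fun x => V x - γ * m x := by
      funext x; rw [hfix x]; simp only [hm]; ring_nf
    rw [this]
    exact hVint.sub (hm_int.const_mul γ)
  have hVmean : ∫ x, V x ∂μ = c := by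
    have h1 : ∫ x, V x ∂μ = ∫ x, (r x + γ * m x) ∂μ := by
      congr 1; funext x; exact hfix x
    rw [integral_add hrint (hm_int.const_mul γ), integral_const_mul, hm_eq] at h1
    have h1γ : (1 - γ) ≠ 0 := by linarith
    rw [hc]
    field_simp
    linarith
  set f : X → ℝ := fun x => V x - c with hf
  have hf_meas : Measurable f := hV.sub measurable_const
  have hf2 : MemLp f 2 μ := hV2.sub (memLp_const c)
  have hf2int : Integrable (fun x => (f x) ^ 2) μ := hf2.integrable_sq
  have hfmean : ∫ x, f x ∂μ = 0 := by
    rw [hf]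
    rw [integral_sub hVint (integrable_const c), hVmean, integral_const]
    simp
  set A : ℝ := ∫ x, (f x) ^ 2 ∂μ with hA
  have hA0 : 0 ≤ A := integral_nonneg fun x => sq_nonneg _
  -- Pf = m - c a.e.
  have hPf : ∀ᵐ x ∂μ, (∫ y, f y ∂P x) = m x - c := by
    filter_upwards [hm_ae] with x hx
    rw [hf]
    rw [integral_sub hx (integrable_const c), integral_const]
    simp [hm]
  have hBdef : ∫ x, (∫ y, f y ∂P x) ^ 2 ∂μ = ∫ x, (m x - c) ^ 2 ∂μ := by
    refine integral_congr_ae ?_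
    filter_upwards [hPf] with x hx
    rw [hx]
  set B : ℝ := ∫ x, (m x - c) ^ 2 ∂μ with hB
  have hB0 : 0 ≤ B := integral_nonneg fun x => sq_nonneg _
  have hergf := herg f hf_meas hf2 hfmean
  rw [hBdef] at hergf
  have hk0 : 0 ≤ 1 - 1 / τ := by
    have : 1 / τ ≤ 1 := by rw [div_le_one hτ0]; exact hτ
    linarith
  have hBA : B ≤ (1 - 1 / τ) ^ 2 * A := by
    have h1 : Real.sqrt B ≤ (1 - 1 / τ) * Real.sqrt A := hergf
    have h2 : B = (Real.sqrt B) ^ 2 := (Real.sq_sqrt hB0).symm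
    have h3 : A = (Real.sqrt A) ^ 2 := (Real.sq_sqrt hA0).symm
    nlinarith [Real.sqrt_nonneg B, Real.sqrt_nonneg A]
  -- expansions
  have hAexp : A = (∫ x, (V x) ^ 2 ∂μ) - c ^ 2 := by
    have hexp : ∀ x, (f x) ^ 2 = ((V x) ^ 2 - (2 * c) * V x) + c ^ 2 := by
      intro x; simp only [hf]; ring
    have hint1 : Integrable (fun x => (V x) ^ 2 - (2 * c) * V x) μ := by
      exact hV2int.sub (hVint.const_mul (2 * c))
    rw [hA]
    simp_rw [hexp]
    rw [integral_add hint1 (integrable_const _),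
      integral_sub hV2int (hVint.const_mul (2 * c)), integral_const_mul, hVmean,
      integral_const]
    simp; ring
  have hBexp : B = (∫ x, (m x) ^ 2 ∂μ) - c ^ 2 := by
    have hexp : ∀ x, (m x - c) ^ 2 = ((m x) ^ 2 - (2 * c) * m x) + c ^ 2 := by
      intro x; ring
    have hint1 : Integrable (fun x => (m x) ^ 2 - (2 * c) * m x) μ := by
      exact hm2_int.sub (hm_int.const_mul (2 * c))
    rw [hB]
    simp_rw [hexp]
    rw [integral_add hint1 (integrable_const _),
      integral_sub hm2_int (hm_int.const_mul (2 * c)), integral_const_mul, hm_eq, hVmean,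
      integral_const]
    simp; ring
  -- σ² computation
  have hσ : ∫ x, (Q x - (m x) ^ 2) ∂μ = A - B := by
    rw [integral_sub hQ_int hm2_int, hQ_eq, hAexp, hBexp]
    ring
  have hσval : ∫ x, ((∫ y, (V y) ^ 2 ∂(P x)) - (∫ y, V y ∂(P x)) ^ 2) ∂μ = A - B := hσ
  have hmain : τ⁻¹ * A ≤ A - B := by
    have hkey : (1 - (1 - 1 / τ) ^ 2) ≥ τ⁻¹ := by
      have h1 : 1 / τ ≤ 1 := by rw [div_le_one hτ0]; exact hτ
      have h2 : (0:ℝ) < 1 / τ := by positivity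
      have : τ⁻¹ = 1 / τ := (one_div τ).symm
      nlinarith
    nlinarith
  constructor
  · calc τ⁻¹ * ∫ x, (V x - (1 - γ)⁻¹ * ∫ z, r z ∂μ) ^ 2 ∂μ = τ⁻¹ * A := rfl
      _ ≤ A - B := hmain
      _ = _ := hσval.symm
  · intro H _ honeH
    set u : Lp ℝ 2 μ := hV2.toLp V with hu
    set one : Lp ℝ 2 μ := MemLp.toLp (fun _ => (1 : ℝ)) (memLp_const 1) with hone
    have hcmem : c • one ∈ H := H.smul_mem c honeH
    have hsm : c • one = (memLp_const c).toLp (fun _ => c) := by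
      rw [hone, ← MemLp.toLp_const_smul c (memLp_const (1:ℝ))]
      exact MemLp.toLp_congr _ _ (by filter_upwards with x; simp)
    have hfLp : (hf2.toLp f) = u - c • one := by
      rw [hsm, hu, ← MemLp.toLp_sub hV2 (memLp_const c)]
      exact MemLp.toLp_congr _ _ (by filter_upwards with x; simp [hf])
    have hproj : ‖u - (H.orthogonalProjectionOnto u : Lp ℝ 2 μ)‖ ≤ ‖u - c • one‖ := by
      rw [← Submodule.starProjection_apply, Submodule.starProjection_minimal]
      exact ciInf_le ⟨0, by rintro _ ⟨x, rfl⟩; exact norm_nonneg _⟩ (⟨c • one, hcmem⟩ : H)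
    have hnorm2 : ‖hf2.toLp f‖ ^ 2 = A := by
      rw [← real_inner_self_eq_norm_sq (hf2.toLp f)]
      rw [MeasureTheory.L2.inner_def]
      have : ∫ a, (inner ℝ ((hf2.toLp f) a) ((hf2.toLp f) a) : ℝ) ∂μ = ∫ a, (f a) ^ 2 ∂μ := by
        refine integral_congr_ae ?_
        filter_upwards [hf2.coeFn_toLp] with a ha
        rw [ha, real_inner_self_eq_norm_sq, Real.norm_eq_abs, sq_abs]
      rw [this]
    have hnf : ‖hf2.toLp f‖ = Real.sqrt A := by
      rw [← hnorm2, Real.sqrt_sq (norm_nonneg _)]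
    have hAle : A ≤ τ * (A - B) := by
      calc A = τ * (τ⁻¹ * A) := by field_simp
        _ ≤ τ * (A - B) := mul_le_mul_of_nonneg_left hmain (le_of_lt hτ0)
    calc ‖u - (H.orthogonalProjectionOnto u : Lp ℝ 2 μ)‖ ≤ ‖u - c • one‖ := hproj
      _ = Real.sqrt A := by rw [← hfLp, hnf]
      _ ≤ Real.sqrt (τ * (A - B)) := Real.sqrt_le_sqrt hAle
      _ = Real.sqrt τ * Real.sqrt (A - B) := Real.sqrt_mul (le_of_lt hτ0) _
      _ = _ := by rw [hσval]
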